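/- arXiv:2102.07253 — 4 statements merged into one kernel-verified Lean document; each statement's English description precedes it below -/
import Mathlib

section
/- The star K_{1,m} with m ≥ 1 edges has modularity 0. -/
open Finset
open scoped Classical

noncomputable section

/-- Number of edges of `G` with both endpoints in `A` (as a real number). -/
def edgesInside {V : Type*} [Fintype V] (G : SimpleGraph V) (A : Finset V) : ℝ :=
  (((A ×ˢ A).filter fun p => G.Adj p.1 p.2).card : ℝ) / 2

/-- Sum of degrees of vertices of `A`. -/
def degSum {V : Type*} [Fintype V] (G : SimpleGraph V) (A : Finset V) : ℕ :=
  ∑ v ∈ A, G.degree v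

/-- Number of edges of `G`. -/
def numEdges {V : Type*} [Fintype V] (G : SimpleGraph V) : ℕ :=
  G.edgeFinset.card

/-- Modularity score of a vertex partition. -/
def modScore {V : Type*} [Fintype V] [DecidableEq V] (G : SimpleGraph V)
    (P : Finpartition (univ : Finset V)) : ℝ :=
  ∑ A ∈ P.parts, (edgesInside G A / (numEdges G : ℝ)
    - ((degSum G A : ℝ) / (2 * (numEdges G : ℝ))) ^ 2)

/-- Modularity of a graph: supremum of modularity scores over all vertex partitions. -/
def modularity {V : Type*} [Fintype V] [DecidableEq V] (G : SimpleGraph V) : ℝ :=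
  sSup {x : ℝ | ∃ P : Finpartition (univ : Finset V), x = modScore G P}

/-- The star `K_{1,m}`: one center adjacent to `m` leaves. -/
def starGraph (m : ℕ) : SimpleGraph (Option (Fin m)) :=
  SimpleGraph.fromRel fun a b => a = none ∧ b ≠ none

lemma star_adj (m : ℕ) (a b : Option (Fin m)) :
    (starGraph m).Adj a b ↔ (a = none ∧ b ≠ none) ∨ (b = none ∧ a ≠ none) := by
  simp only [starGraph, SimpleGraph.fromRel_adj]
  constructor
  · rintro ⟨-, h⟩; exact h
  · rintro (⟨ha, hb⟩ | ⟨hb, ha⟩)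
    · exact ⟨fun h => hb (h ▸ ha), Or.inl ⟨ha, hb⟩⟩
    · exact ⟨fun h => ha (h.trans hb), Or.inr ⟨hb, ha⟩⟩

lemma star_degree_none (m : ℕ) : (starGraph m).degree none = m := by
  rw [← SimpleGraph.card_neighborFinset_eq_degree]
  have : (starGraph m).neighborFinset none = (univ : Finset (Option (Fin m))).erase none := by
    ext u
    simp [SimpleGraph.mem_neighborFinset, star_adj, eq_comm]
  rw [this, card_erase_of_mem (mem_univ _)]
  simp

lemma star_degree_some (m : ℕ) (i : Fin m) : (starGraph m).degree (some i) = 1 := by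
  rw [← SimpleGraph.card_neighborFinset_eq_degree]
  have : (starGraph m).neighborFinset (some i) = {none} := by
    ext u
    simp [SimpleGraph.mem_neighborFinset, star_adj]
  rw [this, card_singleton]

lemma star_numEdges (m : ℕ) : numEdges (starGraph m) = m := by
  have h := SimpleGraph.sum_degrees_eq_twice_card_edges (starGraph m)
  have hsum : ∑ v : Option (Fin m), (starGraph m).degree v = 2 * m := by
    rw [Fintype.sum_option, star_degree_none]
    simp [star_degree_some]; ring
  rw [hsum] at h
  have : 2 * m = 2 * numEdges (starGraph m) := by
    simpa [numEdges, SimpleGraph.edgeFinset] using h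
  omega

lemma star_filter_of_mem (m : ℕ) (A : Finset (Option (Fin m))) (h : none ∈ A) :
    (A ×ˢ A).filter (fun p => (starGraph m).Adj p.1 p.2) =
      ({none} ×ˢ A.erase none) ∪ (A.erase none ×ˢ {none}) := by
  ext ⟨a, b⟩
  simp only [mem_filter, mem_product, mem_union, mem_erase, mem_singleton, star_adj]
  constructor
  · rintro ⟨⟨ha, hb⟩, (⟨h1, h2⟩ | ⟨h1, h2⟩)⟩
    · exact Or.inl ⟨h1, h2, hb⟩
    · exact Or.inr ⟨⟨h2, ha⟩, h1⟩
  · rintro (⟨h1, h2, h3⟩ | ⟨⟨h2, h3⟩, h1⟩)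
    · exact ⟨⟨h1 ▸ h, h3⟩, Or.inl ⟨h1, h2⟩⟩
    · exact ⟨⟨h3, h1 ▸ h⟩, Or.inr ⟨h1, h2⟩⟩

lemma star_edgesInside_of_mem (m : ℕ) (A : Finset (Option (Fin m))) (h : none ∈ A) :
    edgesInside (starGraph m) A = (A.card : ℝ) - 1 := by
  have hd : Disjoint (({none} : Finset (Option (Fin m))) ×ˢ A.erase none)
      (A.erase none ×ˢ ({none} : Finset (Option (Fin m)))) := by
    rw [Finset.disjoint_left]
    rintro ⟨a, b⟩ h1 h2
    simp only [mem_product, mem_singleton, mem_erase] at h1 h2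
    exact h2.1.1 h1.1
  have hc : 1 ≤ A.card := card_pos.mpr ⟨none, h⟩
  rw [edgesInside, star_filter_of_mem m A h, card_union_of_disjoint hd]
  rw [card_product, card_product, card_singleton, card_erase_of_mem h]
  push_cast [hc]
  ring

lemma star_edgesInside_of_not_mem (m : ℕ) (A : Finset (Option (Fin m))) (h : none ∉ A) :
    edgesInside (starGraph m) A = 0 := by
  have : (A ×ˢ A).filter (fun p => (starGraph m).Adj p.1 p.2) = ∅ := by
    ext ⟨a, b⟩
    simp only [mem_filter, mem_product, star_adj, notMem_empty, iff_false, not_and]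
    rintro ⟨ha, hb⟩ (⟨h1, _⟩ | ⟨h1, _⟩)
    · exact h (h1 ▸ ha)
    · exact h (h1 ▸ hb)
  rw [edgesInside, this]
  simp

lemma star_degSum (m : ℕ) (A : Finset (Option (Fin m))) :
    (degSum (starGraph m) A : ℝ) =
      (A.card : ℝ) + (if none ∈ A then (m : ℝ) - 1 else 0) := by
  rw [degSum]
  push_cast
  have : ∀ v ∈ A, ((starGraph m).degree v : ℝ) =
      1 + (if v = none then (m : ℝ) - 1 else 0) := by
    rintro (_ | i) _
    · simp [star_degree_none]
    · simp [star_degree_some]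
  rw [Finset.sum_congr rfl this, Finset.sum_add_distrib, Finset.sum_ite_eq']
  by_cases h : none ∈ A <;> simp [h]

/-- The star `K_{1,m}` with `m ≥ 1` edges has modularity `0`. -/
theorem modularity_star (m : ℕ) (hm : 1 ≤ m) :
    modularity (starGraph m) = 0 := by
  have hm0 : (0 : ℝ) < m := by exact_mod_cast hm
  have hub : ∀ x ∈ {x : ℝ | ∃ P : Finpartition (univ : Finset (Option (Fin m))),
      x = modScore (starGraph m) P}, x ≤ 0 := by
    rintro x ⟨P, rfl⟩
    rw [modScore]
    apply Finset.sum_nonpos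
    intro A hA
    rw [star_numEdges, star_degSum]
    by_cases h : none ∈ A
    · rw [star_edgesInside_of_mem m A h, if_pos h]
      set k : ℝ := (A.card : ℝ) - 1 with hk
      have hk0 : (0 : ℝ) ≤ k := by
        have h1 : 1 ≤ A.card := card_pos.mpr ⟨none, h⟩
        have : (1 : ℝ) ≤ (A.card : ℝ) := by exact_mod_cast h1
        rw [hk]; linarith
      have hrw : ((A.card : ℝ) + ((m : ℝ) - 1)) = (m : ℝ) + k := by rw [hk]; ring
      rw [hrw, sub_nonpos, div_pow, div_le_div_iff₀ hm0 (by positivity)]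
      nlinarith [mul_nonneg hm0.le (sq_nonneg ((m : ℝ) - k))]
    · rw [star_edgesInside_of_not_mem m A h, if_neg h]
      simp only [zero_div, zero_sub, neg_nonpos, add_zero]
      positivity
  have hne : (univ : Finset (Option (Fin m))) ≠ ⊥ := by
    simp [Finset.bot_eq_empty]
    exact Finset.univ_nonempty.ne_empty
  have hmem : (0 : ℝ) ∈ {x : ℝ | ∃ P : Finpartition (univ : Finset (Option (Fin m))),
      x = modScore (starGraph m) P} := by
    refine ⟨Finpartition.indiscrete hne, ?_⟩
    rw [modScore]
    have hparts : (Finpartition.indiscrete hne).parts = {univ} := rfl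
    rw [hparts, Finset.sum_singleton, star_numEdges,
      star_edgesInside_of_mem m _ (mem_univ _), star_degSum]
    have hcard : ((univ : Finset (Option (Fin m))).card : ℝ) = (m : ℝ) + 1 := by
      simp [Finset.card_univ]
    rw [if_pos (mem_univ _), hcard]
    field_simp
    ring
  rw [modularity]
  apply le_antisymm
  · exact Real.sSup_le hub le_rfl
  · exact le_csSup ⟨0, hub⟩ hmem

end
end

section
/- If a class of graphs 𝒞 is maximally modular, then the maximum degree of graphs in 𝒞 is sublinear in the number of edges: for every c > 0 there exists M such that any G ∈ 𝒞 with m ≥ M edges has Δ(G) < c·m. -/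
open Finset
open scoped Classical

noncomputable section

lemma card_filter_adj_univ {V : Type*} [Fintype V] (G : SimpleGraph V) :
    ((univ ×ˢ univ : Finset (V × V)).filter fun p => G.Adj p.1 p.2).card = 2 * numEdges G := by
  classical
  rw [Finset.card_eq_sum_card_fiberwise (f := Prod.fst) (t := univ) (fun x _ => mem_univ _)]
  have h : ∀ u : V, (((univ ×ˢ univ : Finset (V × V)).filter fun p => G.Adj p.1 p.2).filter
      fun p => p.1 = u).card = G.degree u := by
    intro u
    rw [Finset.filter_filter]
    have : ((univ ×ˢ univ : Finset (V × V)).filter fun p => G.Adj p.1 p.2 ∧ p.1 = u)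
        = {u} ×ˢ G.neighborFinset u := by
      ext p
      simp only [mem_filter, mem_product, mem_univ, true_and, mem_singleton,
        SimpleGraph.mem_neighborFinset]
      constructor
      · rintro ⟨h1, rfl⟩; exact ⟨rfl, h1⟩
      · rintro ⟨rfl, h2⟩; exact ⟨h2, rfl⟩
    rw [this, Finset.card_product, Finset.card_singleton, one_mul, SimpleGraph.degree]
  simp only [h]
  rw [numEdges, ← SimpleGraph.sum_degrees_eq_twice_card_edges]

lemma sum_edgesInside_le {V : Type*} [Fintype V] [DecidableEq V] (G : SimpleGraph V)
    (P : Finpartition (univ : Finset V)) :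
    ∑ A ∈ P.parts, edgesInside G A ≤ (numEdges G : ℝ) := by
  classical
  have hdisj : ∀ A ∈ P.parts, ∀ B ∈ P.parts, A ≠ B →
      Disjoint ((A ×ˢ A).filter fun p => G.Adj p.1 p.2)
        ((B ×ˢ B).filter fun p => G.Adj p.1 p.2) := by
    intro A hA B hB hne
    have : Disjoint A B := P.disjoint hA hB hne
    exact Disjoint.mono (filter_subset _ _) (filter_subset _ _)
      (Finset.disjoint_product.mpr (Or.inl this))
  have hcard : ∑ A ∈ P.parts, (((A ×ˢ A).filter fun p => G.Adj p.1 p.2).card : ℝ)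
      ≤ 2 * (numEdges G : ℝ) := by
    have := Finset.card_biUnion hdisj
    have hsub : (P.parts.biUnion fun A => (A ×ˢ A).filter fun p => G.Adj p.1 p.2)
        ⊆ (univ ×ˢ univ : Finset (V × V)).filter fun p => G.Adj p.1 p.2 := by
      intro p hp
      simp only [mem_biUnion] at hp
      obtain ⟨A, _, hpA⟩ := hp
      simp only [mem_filter, mem_product, mem_univ, true_and]
      exact (mem_filter.mp hpA).2
    have h2 := Finset.card_le_card hsub
    rw [this] at h2
    rw [card_filter_adj_univ] at h2
    calc ∑ A ∈ P.parts, (((A ×ˢ A).filter fun p => G.Adj p.1 p.2).card : ℝ)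
        = ((∑ A ∈ P.parts, ((A ×ˢ A).filter fun p => G.Adj p.1 p.2).card : ℕ) : ℝ) := by
          push_cast; ring
      _ ≤ ((2 * numEdges G : ℕ) : ℝ) := by exact_mod_cast h2
      _ = 2 * (numEdges G : ℝ) := by push_cast; ring
  unfold edgesInside
  rw [← Finset.sum_div]
  linarith

lemma degree_le_two_numEdges {V : Type*} [Fintype V] (G : SimpleGraph V) (v : V) :
    G.degree v ≤ 2 * numEdges G := by
  classical
  calc G.degree v ≤ ∑ u : V, G.degree u :=
        Finset.single_le_sum (f := fun u => G.degree u) (fun u _ => Nat.zero_le _) (mem_univ v)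
    _ = 2 * numEdges G := by rw [numEdges, SimpleGraph.sum_degrees_eq_twice_card_edges]

lemma modScore_le {V : Type*} [Fintype V] [DecidableEq V] (G : SimpleGraph V)
    (hm : 0 < numEdges G) (v : V) (P : Finpartition (univ : Finset V)) :
    modScore G P ≤ 1 - ((G.degree v : ℝ) / (2 * (numEdges G : ℝ))) ^ 2 := by
  obtain ⟨A₀, hA₀, hvA₀⟩ := P.exists_mem (mem_univ v)
  have hmpos : (0 : ℝ) < (numEdges G : ℝ) := by exact_mod_cast hm
  have hsum1 : ∑ A ∈ P.parts, edgesInside G A / (numEdges G : ℝ) ≤ 1 := by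
    rw [← Finset.sum_div, div_le_one hmpos]
    exact sum_edgesInside_le G P
  have hdegle : (G.degree v : ℝ) ≤ (degSum G A₀ : ℝ) := by
    exact_mod_cast Finset.single_le_sum (f := fun u => G.degree u)
      (fun u _ => Nat.zero_le _) hvA₀
  have hsq : ((G.degree v : ℝ) / (2 * (numEdges G : ℝ))) ^ 2
      ≤ ∑ A ∈ P.parts, ((degSum G A : ℝ) / (2 * (numEdges G : ℝ))) ^ 2 := by
    calc ((G.degree v : ℝ) / (2 * (numEdges G : ℝ))) ^ 2
        ≤ ((degSum G A₀ : ℝ) / (2 * (numEdges G : ℝ))) ^ 2 :=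
          pow_le_pow_left₀ (by positivity) (by gcongr) 2
      _ ≤ ∑ A ∈ P.parts, ((degSum G A : ℝ) / (2 * (numEdges G : ℝ))) ^ 2 :=
          Finset.single_le_sum
            (f := fun A => ((degSum G A : ℝ) / (2 * (numEdges G : ℝ))) ^ 2)
            (fun A _ => sq_nonneg _) hA₀
  have : modScore G P = ∑ A ∈ P.parts, edgesInside G A / (numEdges G : ℝ)
      - ∑ A ∈ P.parts, ((degSum G A : ℝ) / (2 * (numEdges G : ℝ))) ^ 2 := by
    rw [modScore, Finset.sum_sub_distrib]
  linarith

lemma modularity_le {V : Type*} [Fintype V] [DecidableEq V] (G : SimpleGraph V)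
    (hm : 0 < numEdges G) (v : V) :
    modularity G ≤ 1 - ((G.degree v : ℝ) / (2 * (numEdges G : ℝ))) ^ 2 := by
  apply Real.sSup_le
  · rintro x ⟨P, rfl⟩
    exact modScore_le G hm v P
  · have h2 : ((G.degree v : ℝ) / (2 * (numEdges G : ℝ))) ^ 2 ≤ 1 := by
      have hd : (G.degree v : ℝ) ≤ 2 * (numEdges G : ℝ) := by
        exact_mod_cast degree_le_two_numEdges G v
      have hpos : (0 : ℝ) < 2 * (numEdges G : ℝ) := by
        have : (0:ℝ) < (numEdges G : ℝ) := by exact_mod_cast hm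
        linarith
      rw [sq_le_one_iff_abs_le_one, abs_div]
      rw [abs_of_nonneg (by positivity), abs_of_pos hpos, div_le_one hpos]
      exact hd
    linarith

/-- A maximally modular class of graphs has maximum degree sublinear in the number of edges. -/
theorem maximallyModular_sublinear_maxDegree
    (𝒞 : ∀ n : ℕ, SimpleGraph (Fin n) → Prop)
    (hmax : ∀ ε : ℝ, 0 < ε → ∃ M : ℕ, ∀ (n : ℕ) (G : SimpleGraph (Fin n)),
      𝒞 n G → M ≤ numEdges G → 1 - ε < modularity G) :
    ∀ c : ℝ, 0 < c → ∃ M : ℕ, ∀ (n : ℕ) (G : SimpleGraph (Fin n)),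
      𝒞 n G → M ≤ numEdges G → (G.maxDegree : ℝ) < c * numEdges G := by
  intro c hc
  obtain ⟨M₀, hM₀⟩ := hmax (c ^ 2 / 4) (by positivity)
  refine ⟨max M₀ 1, fun n G hG hm => ?_⟩
  have hm₀ : M₀ ≤ numEdges G := le_trans (le_max_left _ _) hm
  have hm1 : 1 ≤ numEdges G := le_trans (le_max_right _ _) hm
  have hmpos : (0 : ℝ) < (numEdges G : ℝ) := by exact_mod_cast hm1
  by_contra hcon
  push_neg at hcon
  -- V is nonempty since there is at least one edge
  have hne : Nonempty (Fin n) := by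
    obtain ⟨e, he⟩ := Finset.card_pos.mp (lt_of_lt_of_le Nat.zero_lt_one hm1)
    exact ⟨(Quot.out e).1⟩
  obtain ⟨v, hv⟩ := G.exists_maximal_degree_vertex
  have hlt := hM₀ n G hG hm₀
  have hub := modularity_le G (lt_of_lt_of_le Nat.zero_lt_one hm1) v
  have hdeg : c * (numEdges G : ℝ) ≤ (G.degree v : ℝ) := by rwa [hv] at hcon
  have hfrac : c / 2 ≤ (G.degree v : ℝ) / (2 * (numEdges G : ℝ)) := by
    rw [div_le_div_iff₀ (by norm_num) (by positivity)]
    nlinarith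
  have hsq : (c / 2) ^ 2 ≤ ((G.degree v : ℝ) / (2 * (numEdges G : ℝ))) ^ 2 :=
    pow_le_pow_left₀ (by positivity) hfrac 2
  have : (c / 2) ^ 2 = c ^ 2 / 4 := by ring
  linarith

end
end

section
/- (Cheeger's inequality, lower direction) Let G be a finite graph without isolated vertices and λ₂ the second smallest eigenvalue of its normalized Laplacian. Then for every nonempty proper subset S ⊊ V, |E(S, V∖S)| ≥ (λ₂/2) · min{deg(S), deg(V∖S)}. -/
open Finset
open scoped Classical

noncomputable section

/-- Normalized Laplacian `D^{-1/2} (D - A) D^{-1/2}` of a graph. -/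
def normalizedLaplacian {V : Type*} [Fintype V] (G : SimpleGraph V) : Matrix V V ℝ :=
  Matrix.of fun u v =>
    G.lapMatrix ℝ u v / (Real.sqrt (G.degree u) * Real.sqrt (G.degree v))

/-- The second smallest value (with multiplicity) of a function on a fintype. -/
def secondSmallest {n : Type*} [Fintype n] (f : n → ℝ) : ℝ :=
  ((Finset.univ.val.map f).sort (· ≤ ·)).getD 1 0

/-- The smallest value (with multiplicity) of a function on a fintype. -/
def smallestVal {n : Type*} [Fintype n] (f : n → ℝ) : ℝ :=
  ((Finset.univ.val.map f).sort (· ≤ ·)).getD 0 0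

/-- Number of edges of `G` between `S` and its complement. -/
def cutEdges {V : Type*} [Fintype V] [DecidableEq V] (G : SimpleGraph V) (S : Finset V) : ℕ :=
  ((S ×ˢ Sᶜ).filter fun p => G.Adj p.1 p.2).card


open Finset
open scoped Classical

noncomputable section

open Matrix in
private lemma lemA_cheeger' : True := trivial

open Matrix in
lemma lemA {n : Type*} [Fintype n] [DecidableEq n] (hn : 2 ≤ Fintype.card n)
    {M : Matrix n n ℝ} (hM : M.IsHermitian) (hPSD : M.PosSemidef)
    (w x : n → ℝ) (hw : w ≠ 0) (hMw : M *ᵥ w = 0) (hxw : x ⬝ᵥ w = 0) :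
    secondSmallest hM.eigenvalues * (x ⬝ᵥ x) ≤ x ⬝ᵥ (M *ᵥ x) := by
  classical
  set μ : n → ℝ := hM.eigenvalues with hμ
  set U : Matrix n n ℝ := (Matrix.IsHermitian.eigenvectorUnitary hM : Matrix n n ℝ) with hU
  have hUU : U * star U = 1 := (Matrix.mem_unitaryGroup_iff).mp (Matrix.IsHermitian.eigenvectorUnitary hM).2
  have hUU' : star U * U = 1 := (Matrix.mem_unitaryGroup_iff').mp (Matrix.IsHermitian.eigenvectorUnitary hM).2
  have hstar : star U = Uᵀ := by
    rw [Matrix.star_eq_conjTranspose, Matrix.conjTranspose_eq_transpose_of_trivial]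
  have hspec : M = U * Matrix.diagonal μ * star U := by
    simpa using hM.spectral_theorem
  set y : n → ℝ := x ᵥ* U with hy
  set z : n → ℝ := w ᵥ* U with hz
  have hUv : ∀ v : n → ℝ, U *ᵥ (v ᵥ* U) = v := by
    intro v
    rw [← Matrix.mulVec_transpose, Matrix.mulVec_mulVec]
    have h : U * Uᵀ = 1 := by rwa [hstar] at hUU
    rw [h, Matrix.one_mulVec]
  have h1 : x ⬝ᵥ (M *ᵥ x) = ∑ i, μ i * (y i)^2 := by
    rw [hspec, ← Matrix.mulVec_mulVec, Matrix.dotProduct_mulVec x (U * Matrix.diagonal μ),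
      ← Matrix.vecMul_vecMul, hstar, Matrix.mulVec_transpose, ← hy]
    simp only [dotProduct, Matrix.vecMul_diagonal]
    exact Finset.sum_congr rfl fun i _ => by ring
  have h2 : x ⬝ᵥ x = ∑ i, (y i)^2 := by
    have : y ⬝ᵥ y = x ⬝ᵥ x := by
      rw [hy, ← Matrix.dotProduct_mulVec, hUv]
    rw [← this]
    simp only [dotProduct]
    exact Finset.sum_congr rfl fun i _ => by ring
  have hyz : ∑ i, y i * z i = 0 := by
    have : y ⬝ᵥ z = x ⬝ᵥ w := by
      rw [hy, ← Matrix.dotProduct_mulVec, hz, hUv]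
    simpa [dotProduct] using this.trans hxw
  have hz0 : ∀ i, μ i * z i = 0 := by
    have h0 : Matrix.diagonal μ *ᵥ z = 0 := by
      have hw0 : U *ᵥ (Matrix.diagonal μ *ᵥ z) = 0 := by
        have : z = star U *ᵥ w := by rw [hstar, Matrix.mulVec_transpose, hz]
        rw [this, Matrix.mulVec_mulVec, Matrix.mulVec_mulVec, ← hspec, hMw]
      have := congrArg (fun v => star U *ᵥ v) hw0
      simpa [Matrix.mulVec_mulVec, ← Matrix.mul_assoc, hUU', Matrix.one_mulVec] using this
    intro i
    have := congrFun h0 i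
    simpa [Matrix.mulVec_diagonal] using this
  have hzne : z ≠ 0 := by
    intro h
    apply hw
    have h2 := hUv w
    rw [← hz, h, Matrix.mulVec_zero] at h2
    exact h2.symm
  -- sorted eigenvalue list
  set l : List ℝ := ((Finset.univ.val.map μ).sort (· ≤ ·)) with hl
  have hlen : l.length = Fintype.card n := by
    rw [hl, Multiset.length_sort, Multiset.card_map]
    rfl
  obtain ⟨a, b, t, habt⟩ : ∃ a b t, l = a :: b :: t := by
    match l, hlen with
    | [], hlen => simp at hlen; omega
    | [a], hlen => simp at hlen; omega
    | a :: b :: t, _ => exact ⟨a, b, t, rfl⟩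
  have hsort : l.Pairwise (· ≤ ·) := Multiset.pairwise_sort _ _
  have hml : (l : Multiset ℝ) = Finset.univ.val.map μ := Multiset.sort_eq _ _
  rw [habt] at hsort hml
  have hsecond : secondSmallest μ = b := by
    rw [secondSmallest, ← hl, habt]
    rfl
  have hbt : ∀ c ∈ (b :: t : List ℝ), b ≤ c := by
    intro c hc
    rcases List.mem_cons.mp hc with h | h
    · exact le_of_eq h.symm
    · exact List.rel_of_pairwise_cons (List.pairwise_cons.mp hsort).2 h
  have hmemμ : ∀ i : n, μ i ∈ (a :: b :: t : List ℝ) := by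
    intro i
    have h : μ i ∈ (Finset.univ.val.map μ) :=
      Multiset.mem_map_of_mem _ (Finset.mem_val.mpr (Finset.mem_univ i))
    rw [← hml] at h
    exact h
  obtain ⟨i₀, -, hi₀⟩ : ∃ i₀ ∈ Finset.univ.val, μ i₀ = a := by
    apply Multiset.mem_map.mp
    rw [← hml]
    exact List.mem_cons_self
  have hcons : (i₀ ::ₘ Finset.univ.val.erase i₀) = Finset.univ.val :=
    Multiset.cons_erase (Finset.mem_val.mpr (Finset.mem_univ i₀))
  have h2' : (Finset.univ.val.erase i₀).map μ = (↑(b :: t) : Multiset ℝ) := by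
    have h3 : (a ::ₘ (Finset.univ.val.erase i₀).map μ) = a ::ₘ (↑(b :: t) : Multiset ℝ) := by
      rw [← hi₀, ← Multiset.map_cons, hcons, ← hml, hi₀]
      exact (Multiset.cons_coe a _).symm
    exact (Multiset.cons_inj_right a).mp h3
  have F2 : ∀ i, i ≠ i₀ → b ≤ μ i := by
    intro i hi
    have hie : i ∈ Finset.univ.val.erase i₀ :=
      (Multiset.mem_erase_of_ne hi).mpr (Finset.mem_val.mpr (Finset.mem_univ i))
    have : μ i ∈ (↑(b :: t) : Multiset ℝ) := by
      rw [← h2']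
      exact Multiset.mem_map_of_mem _ hie
    exact hbt _ (by exact_mod_cast this)
  have hμnn : ∀ i, 0 ≤ μ i := fun i => hPSD.eigenvalues_nonneg i
  rw [hsecond, h1, h2]
  rcases le_or_gt b 0 with hb | hb
  · have hs1 : (0:ℝ) ≤ ∑ i, (y i)^2 := by positivity
    have hs2 : (0:ℝ) ≤ ∑ i, μ i * (y i)^2 :=
      Finset.sum_nonneg fun i _ => mul_nonneg (hμnn i) (sq_nonneg _)
    nlinarith
  · have hzi : ∀ i, i ≠ i₀ → z i = 0 := by
      intro i hi
      rcases mul_eq_zero.mp (hz0 i) with h | h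
      · exact absurd h (by linarith [F2 i hi])
      · exact h
    have hzi₀ : z i₀ ≠ 0 := by
      intro h
      apply hzne
      funext j
      by_cases hj : j = i₀
      · rw [hj, h]; rfl
      · rw [hzi j hj]; rfl
    have hyi₀ : y i₀ = 0 := by
      have hsum : ∑ i, y i * z i = y i₀ * z i₀ := by
        apply Finset.sum_eq_single i₀
        · intro i _ hi
          rw [hzi i hi, mul_zero]
        · intro h
          exact absurd (Finset.mem_univ i₀) h
      rw [hsum] at hyz
      rcases mul_eq_zero.mp hyz with h | h
      · exact h
      · exact absurd h hzi₀
    calc b * ∑ i, (y i)^2 = ∑ i, b * (y i)^2 := Finset.mul_sum _ _ _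
      _ ≤ ∑ i, μ i * (y i)^2 := by
          apply Finset.sum_le_sum
          intro i _
          by_cases hi : i = i₀
          · rw [hi, hyi₀]
            simp
          · exact mul_le_mul_of_nonneg_right (F2 i hi) (sq_nonneg _)


open Matrix

/-- Cheeger's inequality, lower direction: for every nonempty proper `S ⊊ V`,
`|E(S, V∖S)| ≥ (λ₂/2) · min(deg S, deg (V∖S))`. -/
theorem cheeger_lower {V : Type*} [Fintype V] [DecidableEq V] [Nonempty V]
    (G : SimpleGraph V) (hdeg : ∀ v : V, 0 < G.degree v)
    (hH : (normalizedLaplacian G).IsHermitian) :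
    ∀ S : Finset V, S.Nonempty → S ≠ univ →
      (secondSmallest hH.eigenvalues / 2) *
        min (degSum G S : ℝ) (degSum G Sᶜ : ℝ) ≤ (cutEdges G S : ℝ) := by
  classical
  intro S hS hSu
  set d : V → ℝ := fun v => (G.degree v : ℝ) with hd
  set s : V → ℝ := fun v => Real.sqrt (d v) with hsdef
  have hdpos : ∀ v, 0 < d v := fun v => by simpa [hd] using (Nat.cast_pos (α := ℝ)).mpr (hdeg v)
  have hspos : ∀ v, 0 < s v := fun v => Real.sqrt_pos.mpr (hdpos v)
  have hssq : ∀ v, s v * s v = d v := fun v => Real.mul_self_sqrt (hdpos v).le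
  have hNL : ∀ u v, normalizedLaplacian G u v = G.lapMatrix ℝ u v / (s u * s v) := by
    intro u v
    simp only [normalizedLaplacian, Matrix.of_apply, hsdef, hd]
    congr!
  -- PSD
  have heq : normalizedLaplacian G =
      (Matrix.diagonal fun v => (s v)⁻¹)ᴴ * G.lapMatrix ℝ * Matrix.diagonal (fun v => (s v)⁻¹) := by
    ext u v
    rw [Matrix.mul_diagonal, Matrix.diagonal_conjTranspose, Matrix.diagonal_mul, hNL,
      div_eq_mul_inv, mul_inv]
    simp only [star_trivial, Pi.star_apply]
    ring
  have hPSD : (normalizedLaplacian G).PosSemidef := by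
    rw [heq]
    exact (SimpleGraph.posSemidef_lapMatrix ℝ G).conjTranspose_mul_mul_same _
  -- eigenvector for 0
  have hLs : normalizedLaplacian G *ᵥ s = 0 := by
    funext u
    have hterm : ∀ v, normalizedLaplacian G u v * s v = G.lapMatrix ℝ u v * (s u)⁻¹ := by
      intro v
      rw [hNL]
      field_simp [(hspos u).ne', (hspos v).ne']
    have hrow : ∑ v, G.lapMatrix ℝ u v = 0 := by
      have h := congrFun (G.lapMatrix_mulVec_const_eq_zero (R := ℝ)) u
      simpa [Matrix.mulVec, dotProduct] using h
    show ∑ v, normalizedLaplacian G u v * s v = (0 : V → ℝ) u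
    rw [Finset.sum_congr rfl fun v _ => hterm v, ← Finset.sum_mul, hrow, zero_mul]
    rfl
  have hsne : s ≠ 0 := by
    intro h
    have := congrFun h (Classical.arbitrary V)
    exact absurd this (ne_of_gt (hspos _))
  -- volumes
  set volS : ℝ := (degSum G S : ℝ) with hvS
  set volC : ℝ := (degSum G Sᶜ : ℝ) with hvC
  have hvolS_eq : volS = ∑ v ∈ S, d v := by rw [hvS, degSum]; push_cast; rfl
  have hvolC_eq : volC = ∑ v ∈ Sᶜ, d v := by rw [hvC, degSum]; push_cast; rfl
  have hScne : Sᶜ.Nonempty := by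
    by_contra h
    exact hSu ((Finset.compl_eq_empty_iff S).mp (Finset.not_nonempty_iff_eq_empty.mp h))
  have hvolS : 0 < volS := by
    rw [hvolS_eq]
    exact Finset.sum_pos (fun v _ => hdpos v) hS
  have hvolC : 0 < volC := by
    rw [hvolC_eq]
    exact Finset.sum_pos (fun v _ => hdpos v) hScne
  set α : ℝ := volS⁻¹ with hα
  set β : ℝ := volC⁻¹ with hβ
  have hα0 : 0 < α := inv_pos.mpr hvolS
  have hβ0 : 0 < β := inv_pos.mpr hvolC
  set f : V → ℝ := fun v => if v ∈ S then α else -β with hf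
  set x : V → ℝ := fun v => s v * f v with hx
  have hfS : ∀ v ∈ S, f v = α := fun v hv => by simp [hf, hv]
  have hfC : ∀ v ∈ Sᶜ, f v = -β := fun v hv => by
    simp [hf, Finset.mem_compl.mp hv]
  -- orthogonality
  have hαS : α * volS = 1 := inv_mul_cancel₀ hvolS.ne'
  have hβC : β * volC = 1 := inv_mul_cancel₀ hvolC.ne'
  have hxs : x ⬝ᵥ s = 0 := by
    have h1 : x ⬝ᵥ s = ∑ v, d v * f v := by
      simp only [dotProduct]
      exact Finset.sum_congr rfl fun v _ => by rw [hx, ← hssq v]; ring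
    have e1 : ∑ v ∈ S, d v * f v = volS * α := by
      have : ∑ v ∈ S, d v * f v = ∑ v ∈ S, d v * α :=
        Finset.sum_congr rfl fun v hv => by rw [hfS v hv]
      rw [this, ← Finset.sum_mul, ← hvolS_eq]
    have e2 : ∑ v ∈ Sᶜ, d v * f v = -(volC * β) := by
      have : ∑ v ∈ Sᶜ, d v * f v = ∑ v ∈ Sᶜ, -(d v * β) :=
        Finset.sum_congr rfl fun v hv => by rw [hfC v hv]; ring
      rw [this, Finset.sum_neg_distrib, ← Finset.sum_mul, ← hvolC_eq]
    rw [h1, ← Finset.sum_add_sum_compl S, e1, e2, mul_comm volS α, mul_comm volC β, hαS, hβC]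
    ring
  -- norm
  have hxx : x ⬝ᵥ x = α + β := by
    have h1 : x ⬝ᵥ x = ∑ v, d v * (f v)^2 := by
      simp only [dotProduct]
      exact Finset.sum_congr rfl fun v _ => by rw [hx, ← hssq v]; ring
    have e1 : ∑ v ∈ S, d v * (f v)^2 = volS * α^2 := by
      have : ∑ v ∈ S, d v * (f v)^2 = ∑ v ∈ S, d v * α^2 :=
        Finset.sum_congr rfl fun v hv => by rw [hfS v hv]
      rw [this, ← Finset.sum_mul, ← hvolS_eq]
    have e2 : ∑ v ∈ Sᶜ, d v * (f v)^2 = volC * β^2 := by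
      have : ∑ v ∈ Sᶜ, d v * (f v)^2 = ∑ v ∈ Sᶜ, d v * β^2 :=
        Finset.sum_congr rfl fun v hv => by rw [hfC v hv]; ring
      rw [this, ← Finset.sum_mul, ← hvolC_eq]
    rw [h1, ← Finset.sum_add_sum_compl S, e1, e2]
    have e3 : volS * α^2 = (α * volS) * α := by ring
    have e4 : volC * β^2 = (β * volC) * β := by ring
    rw [e3, e4, hαS, hβC]
    ring
  -- quadratic form
  have hquad : x ⬝ᵥ (normalizedLaplacian G *ᵥ x) = f ⬝ᵥ (G.lapMatrix ℝ *ᵥ f) := by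
    have h1 : ∀ u, (normalizedLaplacian G *ᵥ x) u = (∑ v, G.lapMatrix ℝ u v * f v) * (s u)⁻¹ := by
      intro u
      show ∑ v, normalizedLaplacian G u v * x v = _
      rw [Finset.sum_mul]
      refine Finset.sum_congr rfl fun v _ => ?_
      simp only [hNL, hx]
      field_simp [(hspos u).ne', (hspos v).ne']
    have h2 : x ⬝ᵥ (normalizedLaplacian G *ᵥ x)
        = ∑ u, x u * ((∑ v, G.lapMatrix ℝ u v * f v) * (s u)⁻¹) := by
      simp only [dotProduct]
      exact Finset.sum_congr rfl fun u _ => by rw [h1 u]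
    rw [h2]
    simp only [dotProduct, Matrix.mulVec]
    refine Finset.sum_congr rfl fun u _ => ?_
    simp only [hx]
    field_simp [(hspos u).ne']
  have hform : f ⬝ᵥ (G.lapMatrix ℝ *ᵥ f) =
      (∑ i, ∑ j, if G.Adj i j then (f i - f j)^2 else 0)/2 := by
    rw [← Matrix.toLinearMap₂'_apply', SimpleGraph.lapMatrix_toLinearMap₂']
  set cut : ℝ := (cutEdges G S : ℝ) with hcut
  have hcut0 : 0 ≤ cut := by rw [hcut]; positivity
  set c2 : ℝ := (α + β)^2 with hc2
  have hcount : (∑ i, ∑ j, if G.Adj i j then (f i - f j)^2 else 0) = 2 * c2 * cut := by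
    have hSS : ∑ i ∈ S, ∑ j ∈ S, (if G.Adj i j then (f i - f j)^2 else 0) = 0 := by
      refine Finset.sum_eq_zero fun i hi => Finset.sum_eq_zero fun j hj => ?_
      rw [hfS i hi, hfS j hj]
      simp
    have hCC : ∑ i ∈ Sᶜ, ∑ j ∈ Sᶜ, (if G.Adj i j then (f i - f j)^2 else 0) = 0 := by
      refine Finset.sum_eq_zero fun i hi => Finset.sum_eq_zero fun j hj => ?_
      rw [hfC i hi, hfC j hj]
      simp
    have hSC : ∑ i ∈ S, ∑ j ∈ Sᶜ, (if G.Adj i j then (f i - f j)^2 else 0) = c2 * cut := by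
      have e : ∑ i ∈ S, ∑ j ∈ Sᶜ, (if G.Adj i j then (f i - f j)^2 else 0)
          = ∑ i ∈ S, ∑ j ∈ Sᶜ, (if G.Adj i j then c2 else 0) :=
        Finset.sum_congr rfl fun i hi => Finset.sum_congr rfl fun j hj => by
          rw [hfS i hi, hfC j hj, show (α - -β)^2 = c2 by rw [hc2]; ring]
      rw [e, ← Finset.sum_product', ← Finset.sum_filter, Finset.sum_const, nsmul_eq_mul,
        mul_comm, hcut, cutEdges]
    have hCS : ∑ i ∈ Sᶜ, ∑ j ∈ S, (if G.Adj i j then (f i - f j)^2 else 0) = c2 * cut := by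
      have e : ∑ i ∈ Sᶜ, ∑ j ∈ S, (if G.Adj i j then (f i - f j)^2 else 0)
          = ∑ i ∈ Sᶜ, ∑ j ∈ S, (if G.Adj i j then c2 else 0) :=
        Finset.sum_congr rfl fun i hi => Finset.sum_congr rfl fun j hj => by
          rw [hfC i hi, hfS j hj, show (-β - α)^2 = c2 by rw [hc2]; ring]
      rw [e, ← Finset.sum_product', ← Finset.sum_filter, Finset.sum_const, nsmul_eq_mul,
        mul_comm, hcut, cutEdges]
      congr 1
      norm_cast
      apply Finset.card_bij (fun (p : V × V) _ => (p.2, p.1))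
      · intro p hp
        simp only [Finset.mem_filter, Finset.mem_product, Finset.mem_compl] at hp ⊢
        exact ⟨⟨hp.1.2, hp.1.1⟩, hp.2.symm⟩
      · intro p hp q hq h
        simpa [Prod.ext_iff, and_comm] using h
      · intro p hp
        refine ⟨(p.2, p.1), ?_, by simp⟩
        simp only [Finset.mem_filter, Finset.mem_product, Finset.mem_compl] at hp ⊢
        exact ⟨⟨hp.1.2, hp.1.1⟩, hp.2.symm⟩
    calc ∑ i, ∑ j, (if G.Adj i j then (f i - f j)^2 else 0)
        = (∑ i ∈ S, ∑ j, (if G.Adj i j then (f i - f j)^2 else 0))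
          + ∑ i ∈ Sᶜ, ∑ j, (if G.Adj i j then (f i - f j)^2 else 0) :=
          (Finset.sum_add_sum_compl S _).symm
      _ = (∑ i ∈ S, ((∑ j ∈ S, (if G.Adj i j then (f i - f j)^2 else 0))
            + ∑ j ∈ Sᶜ, (if G.Adj i j then (f i - f j)^2 else 0)))
          + ∑ i ∈ Sᶜ, ((∑ j ∈ S, (if G.Adj i j then (f i - f j)^2 else 0))
            + ∑ j ∈ Sᶜ, (if G.Adj i j then (f i - f j)^2 else 0)) := by
          have e1 : ∀ (T : Finset V), ∑ i ∈ T, ∑ j, (if G.Adj i j then (f i - f j)^2 else 0)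
              = ∑ i ∈ T, ((∑ j ∈ S, (if G.Adj i j then (f i - f j)^2 else 0))
                + ∑ j ∈ Sᶜ, (if G.Adj i j then (f i - f j)^2 else 0)) :=
            fun T => Finset.sum_congr rfl fun i _ => (Finset.sum_add_sum_compl S _).symm
          rw [e1 S, e1 Sᶜ]
      _ = 2 * c2 * cut := by
          rw [Finset.sum_add_distrib, Finset.sum_add_distrib, hSS, hCC, hSC, hCS]
          ring
  -- apply the spectral lemma
  obtain ⟨a, ha⟩ := hS
  obtain ⟨b, hb⟩ := hScne
  have hab : a ≠ b := fun h => (Finset.mem_compl.mp hb) (h ▸ ha)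
  have hn : 2 ≤ Fintype.card V := Fintype.one_lt_card_iff_nontrivial.mpr ⟨⟨a, b, hab⟩⟩
  have hmain := lemA hn hH hPSD s x hsne hLs hxs
  rw [hxx, hquad, hform, hcount] at hmain
  -- hmain : secondSmallest hH.eigenvalues * (α + β) ≤ 2 * c2 * cut / 2
  set lam := secondSmallest hH.eigenvalues with hlam
  have hαβ : 0 < α + β := add_pos hα0 hβ0
  have hR : lam ≤ cut * (α + β) := by
    have h' : lam * (α + β) ≤ (cut * (α + β)) * (α + β) := by
      rw [hc2] at hmain
      nlinarith [hmain]
    exact le_of_mul_le_mul_right h' hαβ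
  have hm1 : min volS volC ≤ volS := min_le_left _ _
  have hm2 : min volS volC ≤ volC := min_le_right _ _
  have hm0 : 0 ≤ min volS volC := le_min hvolS.le hvolC.le
  have hαm : α * min volS volC ≤ 1 := by
    calc α * min volS volC ≤ α * volS := mul_le_mul_of_nonneg_left hm1 hα0.le
      _ = 1 := hαS
  have hβm : β * min volS volC ≤ 1 := by
    calc β * min volS volC ≤ β * volC := mul_le_mul_of_nonneg_left hm2 hβ0.le
      _ = 1 := hβC
  have hfin : lam * min volS volC ≤ 2 * cut := by
    calc lam * min volS volC ≤ cut * (α + β) * min volS volC :=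
          mul_le_mul_of_nonneg_right hR hm0
      _ = cut * (α * min volS volC + β * min volS volC) := by ring
      _ ≤ cut * (1 + 1) := by
          apply mul_le_mul_of_nonneg_left _ hcut0
          linarith
      _ = 2 * cut := by ring
  linarith


end
end
end

section
/- For a finite graph G without isolated vertices, the second smallest eigenvalue of the normalized Laplacian is at most the second smallest eigenvalue of the (combinatorial) Laplacian: λ₂(ℒ) ≤ λ₂(L). -/
open Finset
open scoped Classical
open Matrix

noncomputable section

section Aux

lemma list_basics_aux {n : Type*} [Fintype n] (f : n → ℝ) (h2 : 2 ≤ Fintype.card n) :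
    ∃ h1 : 1 < ((Finset.univ.val.map f).sort (· ≤ ·)).length,
      secondSmallest f = ((Finset.univ.val.map f).sort (· ≤ ·))[1] := by
  have hlen : ((Finset.univ.val.map f).sort (· ≤ ·)).length = Fintype.card n := by
    simp [Multiset.length_sort]
  have h1 : 1 < ((Finset.univ.val.map f).sort (· ≤ ·)).length := by omega
  exact ⟨h1, by simp [secondSmallest, List.getD_eq_getElem?_getD, List.getElem?_eq_getElem h1]⟩

lemma secondSmallest_mem_aux {n : Type*} [Fintype n] (f : n → ℝ) (h2 : 2 ≤ Fintype.card n) :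
    ∃ k, f k = secondSmallest f := by
  obtain ⟨h1, hget⟩ := list_basics_aux f h2
  rw [hget]
  have : ((Finset.univ.val.map f).sort (· ≤ ·))[1] ∈ (Finset.univ.val.map f) := by
    have hmem : ((Finset.univ.val.map f).sort (· ≤ ·))[1]
        ∈ (((Finset.univ.val.map f).sort (· ≤ ·) : List ℝ) : Multiset ℝ) :=
      Multiset.mem_coe.mpr (List.getElem_mem h1)
    rwa [Multiset.sort_eq] at hmem
  obtain ⟨k, -, hk⟩ := Multiset.mem_map.mp this
  exact ⟨k, hk⟩

lemma countP_le_one_below_aux {n : Type*} [Fintype n] (f : n → ℝ) (h2 : 2 ≤ Fintype.card n) :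
    (Finset.univ.filter (fun k => f k < secondSmallest f)).card ≤ 1 := by
  obtain ⟨h1, hget⟩ := list_basics_aux f h2
  set s := secondSmallest f with hs
  set l := ((Finset.univ.val.map f).sort (· ≤ ·)) with hl
  have hsort : l.Pairwise (· ≤ ·) := Multiset.pairwise_sort _ _
  have hlist : l.countP (fun a => decide (a < s)) ≤ 1 := by
    have hdrop : ∀ x ∈ l.drop 1, s ≤ x := by
      intro x hx
      obtain ⟨k, hk, hxk⟩ := List.mem_iff_getElem.mp hx
      rw [List.getElem_drop] at hxk
      rw [hget, ← hxk]
      exact hsort.rel_get_of_le (a := ⟨1, h1⟩)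
        (b := ⟨1 + k, by simp only [List.length_drop] at hk; omega⟩) (by simp [Fin.le_def])
    calc l.countP (fun a => decide (a < s))
        = (l.take 1).countP (fun a => decide (a < s))
          + (l.drop 1).countP (fun a => decide (a < s)) := by
          rw [← List.countP_append, List.take_append_drop]
      _ ≤ 1 + 0 := by
          refine Nat.add_le_add ?_ ?_
          · exact le_trans List.countP_le_length (by simp)
          · refine Nat.le_of_eq (List.countP_eq_zero.mpr ?_)
            intro x hx
            simpa using not_lt.mpr (hdrop x hx)
      _ = 1 := rfl
  have hms : Multiset.countP (fun a => a < s) (Finset.univ.val.map f)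
      = (Finset.univ.filter (fun k => f k < s)).card := by
    rw [Multiset.countP_map]; rfl
  have hcoe : Multiset.countP (fun a => a < s) (Finset.univ.val.map f)
      = l.countP (fun a => decide (a < s)) := by
    rw [← Multiset.sort_eq (Finset.univ.val.map f) (· ≤ ·), ← hl]
    simp [Multiset.coe_countP, List.countP_eq_length_filter]
  omega

lemma two_le_countP_aux {n : Type*} [Fintype n] (f : n → ℝ) (h2 : 2 ≤ Fintype.card n) :
    2 ≤ (Finset.univ.filter (fun k => f k ≤ secondSmallest f)).card := by
  obtain ⟨h1, hget⟩ := list_basics_aux f h2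
  set s := secondSmallest f with hs
  set l := ((Finset.univ.val.map f).sort (· ≤ ·)) with hl
  have hsort : l.Pairwise (· ≤ ·) := Multiset.pairwise_sort _ _
  have h0 : 0 < l.length := by omega
  have hlist : 2 ≤ l.countP (fun a => decide (a ≤ s)) := by
    have hle0 : l[0] ≤ s := by
      rw [hget]
      exact hsort.rel_get_of_le (a := ⟨0, h0⟩) (b := ⟨1, h1⟩) (by simp [Fin.le_def])
    have hle1 : l[1] ≤ s := le_of_eq hget.symm
    have htake : (l.take 2) = [l[0], l[1]] := by
      refine List.ext_getElem ?_ ?_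
      · simp; omega
      · intro k hk hk'
        simp only [List.length_take] at hk
        have hk2 : k < 2 := by omega
        interval_cases k <;> simp [List.getElem_take]
    calc (2:ℕ) = (l.take 2).countP (fun a => decide (a ≤ s)) := by
          rw [htake]; simp [hle0, hle1]
      _ ≤ l.countP (fun a => decide (a ≤ s)) := by
          conv_rhs => rw [← List.take_append_drop 2 l]
          rw [List.countP_append]; omega
  have hms : Multiset.countP (fun a => a ≤ s) (Finset.univ.val.map f)
      = (Finset.univ.filter (fun k => f k ≤ s)).card := by
    rw [Multiset.countP_map]; rfl
  have hcoe : Multiset.countP (fun a => a ≤ s) (Finset.univ.val.map f)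
      = l.countP (fun a => decide (a ≤ s)) := by
    rw [← Multiset.sort_eq (Finset.univ.val.map f) (· ≤ ·), ← hl]
    simp [Multiset.coe_countP, List.countP_eq_length_filter]
  omega

lemma quad_eq_aux {V : Type*} [Fintype V] [DecidableEq V] (M : Matrix V V ℝ)
    (hM : M.IsHermitian) (w : EuclideanSpace ℝ V) :
    (inner ℝ w (WithLp.toLp 2 (M *ᵥ w) : EuclideanSpace ℝ V) : ℝ)
      = ∑ i, hM.eigenvalues i * (hM.eigenvectorBasis.repr w i)^2 := by
  set e := hM.eigenvectorBasis
  have hw : w = ∑ i, e.repr w i • e i := (e.sum_repr w).symm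
  have hMw : (WithLp.toLp 2 (M *ᵥ w) : EuclideanSpace ℝ V) = ∑ i, (e.repr w i * hM.eigenvalues i) • e i := by
    conv_lhs => rw [hw]
    rw [WithLp.ofLp_sum, Matrix.mulVec_sum, WithLp.toLp_sum]
    refine Finset.sum_congr rfl fun i _ => ?_
    rw [WithLp.ofLp_smul, Matrix.mulVec_smul, hM.mulVec_eigenvectorBasis]
    ext v
    simp [mul_comm]
    ring
  rw [hMw, inner_sum]
  refine Finset.sum_congr rfl fun i _ => ?_
  rw [real_inner_smul_right, real_inner_comm, ← e.repr_apply_apply]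
  ring

lemma norm_eq_aux {V : Type*} [Fintype V] (b : OrthonormalBasis V ℝ (EuclideanSpace ℝ V))
    (w : EuclideanSpace ℝ V) : (inner ℝ w w : ℝ) = ∑ i, (b.repr w i)^2 := by
  have h := b.repr.inner_map_map w w
  rw [← h, PiLp.inner_apply]
  simp only [RCLike.inner_apply, starRingEnd_apply, star_trivial, sq]

lemma secondSmallest_le_of_two_dim {V : Type*} [Fintype V] [DecidableEq V]
    (M : Matrix V V ℝ) (hM : M.IsHermitian) (c : ℝ) (x y : EuclideanSpace ℝ V)
    (hind : ∀ a b : ℝ, a • x + b • y = 0 → a = 0 ∧ b = 0)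
    (hQ : ∀ a b : ℝ, (inner ℝ (a • x + b • y) (WithLp.toLp 2 (M *ᵥ (a • x + b • y)) : EuclideanSpace ℝ V) : ℝ)
      ≤ c * inner ℝ (a • x + b • y) (a • x + b • y)) :
    secondSmallest hM.eigenvalues ≤ c := by
  have hx0 : x ≠ 0 := by
    intro h
    have := hind 1 0 (by simp [h])
    exact one_ne_zero this.1
  have h2 : 2 ≤ Fintype.card V := by
    by_contra hcard
    have hsub : Subsingleton V := Fintype.card_le_one_iff_subsingleton.mp (by omega)
    rcases isEmpty_or_nonempty V with hV | hV
    · exact hx0 (Subsingleton.elim _ _)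
    · obtain ⟨v⟩ := hV
      have hzero : (y v) • x + (-(x v)) • y = 0 := by
        ext u
        have huv : u = v := Subsingleton.elim u v
        subst huv
        simp
        ring
      have := hind _ _ hzero
      apply hx0
      ext u
      have huv : u = v := Subsingleton.elim u v
      subst huv
      simpa using this.2
  by_contra hc
  push_neg at hc
  set s := secondSmallest hM.eigenvalues with hs
  set e := hM.eigenvectorBasis with he
  set μ := hM.eigenvalues with hmu
  have huniq : ∀ i j, μ i < s → μ j < s → i = j := by
    have hcard := countP_le_one_below_aux μ h2
    intro i j hi hj
    exact Finset.card_le_one.mp hcard i (by simp [← hs, hi]) j (by simp [← hs, hj])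
  obtain ⟨a, b, hab, hrepr⟩ : ∃ a b : ℝ, ¬(a = 0 ∧ b = 0) ∧
      ∀ i, μ i < s → e.repr (a • x + b • y) i = 0 := by
    by_cases hex : ∃ i, μ i < s
    · obtain ⟨i₀, hi₀⟩ := hex
      set p := e.repr x i₀
      set q := e.repr y i₀
      by_cases hpq : p = 0 ∧ q = 0
      · refine ⟨1, 0, by simp, fun i hi => ?_⟩
        have : i = i₀ := huniq _ _ hi hi₀
        subst this
        simp only [map_add, _root_.map_smul, PiLp.add_apply, PiLp.smul_apply, Pi.add_apply,
          Pi.smul_apply, smul_eq_mul]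
        rw [show (e.repr x) i = 0 from hpq.1, show (e.repr y) i = 0 from hpq.2]
        ring
      · refine ⟨q, -p, ?_, fun i hi => ?_⟩
        · intro h
          exact hpq ⟨by simpa using h.2, h.1⟩
        · have : i = i₀ := huniq _ _ hi hi₀
          subst this
          simp only [map_add, _root_.map_smul, PiLp.add_apply, PiLp.smul_apply, Pi.add_apply,
            Pi.smul_apply, smul_eq_mul]
          show q * p + (-p) * q = 0
          ring
    · exact ⟨1, 0, by simp, fun i hi => absurd ⟨i, hi⟩ hex⟩
  set w := a • x + b • y with hw
  have hw0 : w ≠ 0 := by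
    intro h
    obtain ⟨ha, hb⟩ := hind a b h
    exact hab ⟨ha, hb⟩
  have hpos : (0:ℝ) < inner ℝ w w :=
    lt_of_le_of_ne real_inner_self_nonneg (Ne.symm (inner_self_ne_zero.mpr hw0))
  have hkey : s * (inner ℝ w w : ℝ) ≤ inner ℝ w (WithLp.toLp 2 (M *ᵥ w) : EuclideanSpace ℝ V) := by
    rw [quad_eq_aux M hM w, norm_eq_aux e w, Finset.mul_sum]
    refine Finset.sum_le_sum fun i _ => ?_
    by_cases hi : μ i < s
    · rw [hrepr i hi]
      simp
    · exact mul_le_mul_of_nonneg_right (not_lt.mp hi) (sq_nonneg _)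
  have hq := hQ a b
  simp only [← WithLp.ofLp_smul, ← WithLp.ofLp_add] at hq
  rw [← hw] at hq
  nlinarith

end Aux

/-- For a graph without isolated vertices, `λ₂(ℒ) ≤ λ₂(L)`. -/
theorem secondSmallest_normalized_le_lap {V : Type*} [Fintype V] [DecidableEq V]
    (G : SimpleGraph V) (hdeg : ∀ v : V, 0 < G.degree v)
    (hN : (normalizedLaplacian G).IsHermitian)
    (hL : (G.lapMatrix ℝ).IsHermitian) :
    secondSmallest hN.eigenvalues ≤ secondSmallest hL.eigenvalues := by
  rcases isEmpty_or_nonempty V with hV | hV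
  · have hz : ∀ f : V → ℝ, secondSmallest f = 0 := by
      intro f
      simp [secondSmallest, Multiset.map_eq_zero.mpr]
    rw [hz, hz]
  · -- the graph has at least two vertices
    obtain ⟨v⟩ := hV
    obtain ⟨u, hu⟩ := (G.degree_pos_iff_exists_adj v).mp (hdeg v)
    have hne : u ≠ v := fun h => by subst h; exact G.irrefl hu
    have h2 : 2 ≤ Fintype.card V := Fintype.one_lt_card_iff_nontrivial.mpr ⟨u, v, hne⟩
    set μ := hL.eigenvalues with hmu
    set sL := secondSmallest μ with hsL
    have hsL0 : 0 ≤ sL := by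
      obtain ⟨k, hk⟩ := secondSmallest_mem_aux μ h2
      rw [hsL, ← hk]
      exact (SimpleGraph.posSemidef_lapMatrix ℝ G).eigenvalues_nonneg k
    -- two distinct indices with eigenvalue ≤ sL
    obtain ⟨i, hi, j, hj, hij⟩ :=
      Finset.one_lt_card.mp (lt_of_lt_of_le one_lt_two (two_le_countP_aux μ h2))
    rw [Finset.mem_filter] at hi hj
    have hμi : μ i ≤ sL := hi.2
    have hμj : μ j ≤ sL := hj.2
    set e := hL.eigenvectorBasis with he
    have hoi : ∀ k l : V, (inner ℝ (e k) (e l) : ℝ) = if k = l then 1 else 0 :=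
      orthonormal_iff_ite.mp e.orthonormal
    -- square-root-degree scaling
    have hdpos : ∀ v : V, (0:ℝ) < Real.sqrt (G.degree v) := fun v =>
      Real.sqrt_pos.mpr (by exact_mod_cast hdeg v)
    have hd1 : ∀ v : V, (1:ℝ) ≤ (G.degree v : ℝ) := fun v => by exact_mod_cast hdeg v
    set x₁ : EuclideanSpace ℝ V := WithLp.toLp 2 (fun v => Real.sqrt (G.degree v) * e i v) with hx₁
    set x₂ : EuclideanSpace ℝ V := WithLp.toLp 2 (fun v => Real.sqrt (G.degree v) * e j v) with hx₂
    refine secondSmallest_le_of_two_dim _ hN sL x₁ x₂ ?_ ?_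
    · -- linear independence
      intro a b h
      have hz : a • (e i) + b • (e j) = (0 : EuclideanSpace ℝ V) := by
        ext v
        have hv : (a • x₁ + b • x₂) v = 0 := by rw [h]; rfl
        simp only [PiLp.add_apply, PiLp.smul_apply, smul_eq_mul, hx₁, hx₂] at hv ⊢
        have : Real.sqrt (G.degree v) * (a * e i v + b * e j v) = 0 := by
          rw [mul_add]; convert hv using 2 <;> ring
        have h0 := (mul_eq_zero.mp this).resolve_left (ne_of_gt (hdpos v))
        simpa using h0
      constructor
      · have h0 : (inner ℝ (e i) (a • (e i) + b • (e j) : EuclideanSpace ℝ V) : ℝ) = 0 := by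
          rw [hz]; exact inner_zero_right _
        rw [inner_add_right, real_inner_smul_right, real_inner_smul_right,
          hoi i i, hoi i j] at h0
        simpa [hij] using h0
      · have h0 : (inner ℝ (e j) (a • (e i) + b • (e j) : EuclideanSpace ℝ V) : ℝ) = 0 := by
          rw [hz]; exact inner_zero_right _
        rw [inner_add_right, real_inner_smul_right, real_inner_smul_right,
          hoi j i, hoi j j] at h0
        simpa [Ne.symm hij] using h0
    · -- Rayleigh bound
      intro a b
      set w : EuclideanSpace ℝ V := a • x₁ + b • x₂ with hw
      set z : EuclideanSpace ℝ V := a • (e i) + b • (e j) with hzdef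
      have hwz : ∀ v, w v = Real.sqrt (G.degree v) * z v := by
        intro v
        simp only [hw, hzdef, hx₁, hx₂, PiLp.add_apply, PiLp.smul_apply, smul_eq_mul,
          Pi.add_apply, Pi.smul_apply]
        ring
      -- quadratic forms agree
      have hlapinst : (@SimpleGraph.lapMatrix V ℝ _ G
            (fun a b => Classical.propDecidable (G.Adj a b))
            (fun a b => Classical.propDecidable (a = b)) _) = G.lapMatrix ℝ :=
        congrArg (fun d2 : DecidableEq V => @SimpleGraph.lapMatrix V ℝ _ G
          (fun a b => Classical.propDecidable (G.Adj a b)) d2 _) (Subsingleton.elim _ _)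
      have hquad : (inner ℝ w (WithLp.toLp 2 ((normalizedLaplacian G) *ᵥ w) : EuclideanSpace ℝ V) : ℝ)
          = inner ℝ z (WithLp.toLp 2 ((G.lapMatrix ℝ) *ᵥ z) : EuclideanSpace ℝ V) := by
        rw [PiLp.inner_apply, PiLp.inner_apply]
        simp only [RCLike.inner_apply, starRingEnd_apply, star_trivial]
        refine Finset.sum_congr rfl fun u _ => ?_
        simp only [PiLp.toLp_apply, Matrix.mulVec, dotProduct, Finset.sum_mul]
        refine Finset.sum_congr rfl fun v' _ => ?_
        rw [hwz u, hwz v']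
        simp only [normalizedLaplacian, Matrix.of_apply, hlapinst]
        show G.lapMatrix ℝ u v' / (Real.sqrt (G.degree u) * Real.sqrt (G.degree v'))
              * (Real.sqrt (G.degree v') * z v') * (Real.sqrt (G.degree u) * z u)
            = G.lapMatrix ℝ u v' * z v' * z u
        have h1 := ne_of_gt (hdpos u)
        have h2 := ne_of_gt (hdpos v')
        field_simp
      -- evaluate the Laplacian quadratic form
      have hLz : (WithLp.toLp 2 ((G.lapMatrix ℝ) *ᵥ z) : EuclideanSpace ℝ V)
          = ((a * μ i) • (e i) + (b * μ j) • (e j) : EuclideanSpace ℝ V) := by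
        rw [hzdef, WithLp.ofLp_add, WithLp.ofLp_smul, WithLp.ofLp_smul]
        rw [Matrix.mulVec_add, Matrix.mulVec_smul, Matrix.mulVec_smul,
          hL.mulVec_eigenvectorBasis, hL.mulVec_eigenvectorBasis]
        ext v'
        simp only [PiLp.add_apply, PiLp.smul_apply, Pi.add_apply, Pi.smul_apply, smul_eq_mul,
          PiLp.toLp_apply]
        ring
      have hzei : (inner ℝ z (e i) : ℝ) = a := by
        rw [hzdef, inner_add_left, real_inner_smul_left, real_inner_smul_left,
          hoi i i, hoi j i]
        simp [Ne.symm hij]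
      have hzej : (inner ℝ z (e j) : ℝ) = b := by
        rw [hzdef, inner_add_left, real_inner_smul_left, real_inner_smul_left,
          hoi i j, hoi j j]
        simp [hij]
      have hquadz : (inner ℝ z (WithLp.toLp 2 ((G.lapMatrix ℝ) *ᵥ z) : EuclideanSpace ℝ V) : ℝ)
          = a^2 * μ i + b^2 * μ j := by
        rw [hLz]
        rw [inner_add_right, real_inner_smul_right, real_inner_smul_right, hzei, hzej]
        ring
      have hzz : (inner ℝ z z : ℝ) = a^2 + b^2 := by
        have : (inner ℝ z z : ℝ) = a * (inner ℝ z (e i) : ℝ) + b * (inner ℝ z (e j) : ℝ) := by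
          conv_lhs => rw [show z = (a • (e i) + b • (e j) : EuclideanSpace ℝ V) from hzdef]
          rw [inner_add_right, real_inner_smul_right, real_inner_smul_right]
        rw [this, hzei, hzej]
        ring
      -- comparison of norms
      have hnorm : (inner ℝ z z : ℝ) ≤ inner ℝ w w := by
        rw [PiLp.inner_apply, PiLp.inner_apply]
        simp only [RCLike.inner_apply, starRingEnd_apply, star_trivial]
        refine Finset.sum_le_sum fun v' _ => ?_
        rw [hwz v']
        have hsq : Real.sqrt (G.degree v') * Real.sqrt (G.degree v') = (G.degree v' : ℝ) :=
          Real.mul_self_sqrt (by positivity)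
        calc z v' * z v' = 1 * (z v' * z v') := by ring
          _ ≤ (G.degree v' : ℝ) * (z v' * z v') := by
              refine mul_le_mul_of_nonneg_right (hd1 v') (mul_self_nonneg _)
          _ = Real.sqrt (G.degree v') * z v' * (Real.sqrt (G.degree v') * z v') := by
              linear_combination (z v' * z v') * hsq.symm
      calc (inner ℝ w (WithLp.toLp 2 ((normalizedLaplacian G) *ᵥ w) : EuclideanSpace ℝ V) : ℝ)
          = a^2 * μ i + b^2 * μ j := by rw [hquad, hquadz]
        _ ≤ sL * (a^2 + b^2) := by nlinarith [sq_nonneg a, sq_nonneg b]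
        _ = sL * (inner ℝ z z : ℝ) := by rw [hzz]
        _ ≤ sL * (inner ℝ w w : ℝ) := mul_le_mul_of_nonneg_left hnorm hsL0

end
end
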